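/- Let $n = m^2$ and define $\delta_{mp+q} = 4^{p+m}(m+q)$ for $0\le p < m$, $1\le q\le m$. Then the matrix $A = (1/(\delta_i+\delta_j))_{1\le i,j\le n}$ satisfies $\mathrm{per}(A) \le 1$. -/

import Mathlib

open Finset

/-- The permanent of the Cauchy matrix built from `δ_{mp+q} = 4^{p+m}(m+q)` is at most 1. -/
theorem permanent_le_one (m : ℕ) (hm : 1 ≤ m) (δ : Fin (m * m) → ℝ)
    (hδ : ∀ i : Fin (m * m),
      δ i = (4 : ℝ) ^ ((i : ℕ) / m + m) * ((m : ℝ) + ((i : ℕ) % m + 1))) :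
    ∑ σ : Equiv.Perm (Fin (m * m)), ∏ i, (1 / (δ i + δ (σ i))) ≤ 1 := by
  set c : ℝ := 2 * m * 4 ^ m with hc
  have hm' : (1:ℝ) ≤ m := by exact_mod_cast hm
  have hcpos : (0:ℝ) < c := by positivity
  have hmp : (0:ℝ) < (m:ℝ) * 4 ^ m := by positivity
  have hδlb : ∀ i, (m:ℝ) * 4 ^ m ≤ δ i := by
    intro i
    rw [hδ i]
    have h1 : (4:ℝ) ^ m ≤ 4 ^ ((i:ℕ)/m + m) :=
      pow_le_pow_right₀ (by norm_num) (Nat.le_add_left m _)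
    have h2 : (m:ℝ) ≤ (m:ℝ) + ((i:ℕ)%m + 1) := by
      have hm0 : (m:ℝ) ≠ 0 := by positivity
      have h0 : (((i:ℕ):ℝ)) % (m:ℝ) = 0 :=
        EuclideanDomain.mod_eq_zero.mpr ((isUnit_iff_ne_zero.mpr hm0).dvd)
      rw [h0]; linarith
    calc (m:ℝ) * 4 ^ m ≤ ((m:ℝ) + ((i:ℕ)%m + 1)) * 4 ^ ((i:ℕ)/m + m) := by
          apply mul_le_mul h2 h1 (by positivity) (by linarith)
      _ = _ := by ring
  have hfac : ∀ (i j : Fin (m*m)), 1 / (δ i + δ j) ≤ 1 / c := by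
    intro i j
    apply one_div_le_one_div_of_le hcpos
    have := hδlb i; have := hδlb j
    rw [hc]; linarith
  have hfnn : ∀ (i j : Fin (m*m)), 0 ≤ 1 / (δ i + δ j) := by
    intro i j
    have := hδlb i; have := hδlb j
    apply div_nonneg (by norm_num)
    linarith
  have hterm : ∀ σ : Equiv.Perm (Fin (m*m)),
      ∏ i, (1 / (δ i + δ (σ i))) ≤ (1/c) ^ (m*m) := by
    intro σ
    calc ∏ i, (1 / (δ i + δ (σ i))) ≤ ∏ _i : Fin (m*m), (1/c) :=
          Finset.prod_le_prod (fun i _ => hfnn i (σ i)) (fun i _ => hfac i (σ i))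
      _ = (1/c) ^ (m*m) := by simp
  have hsum : ∑ σ : Equiv.Perm (Fin (m*m)), ∏ i, (1 / (δ i + δ (σ i)))
      ≤ (Nat.factorial (m*m) : ℝ) * (1/c) ^ (m*m) := by
    calc _ ≤ ∑ _σ : Equiv.Perm (Fin (m*m)), (1/c) ^ (m*m) :=
          Finset.sum_le_sum (fun σ _ => hterm σ)
      _ = (Fintype.card (Equiv.Perm (Fin (m*m))) : ℝ) * (1/c) ^ (m*m) := by
          simp [Finset.sum_const, nsmul_eq_mul]
      _ = (Nat.factorial (m*m) : ℝ) * (1/c) ^ (m*m) := by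
          rw [Fintype.card_perm, Fintype.card_fin]
  refine hsum.trans ?_
  have hnat : Nat.factorial (m*m) ≤ (2 * m * 4 ^ m) ^ (m*m) := by
    calc Nat.factorial (m*m) ≤ (m*m) ^ (m*m) := Nat.factorial_le_pow (m*m)
      _ ≤ (2 * m * 4 ^ m) ^ (m*m) := by
        apply Nat.pow_le_pow_left
        have h1 : m ≤ 4 ^ m := le_of_lt (Nat.lt_pow_self (n := m) (by norm_num))
        calc m * m ≤ m * 4 ^ m := Nat.mul_le_mul_left m h1
          _ ≤ 2 * m * 4 ^ m := by nlinarith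
  have hnat' : (Nat.factorial (m*m) : ℝ) ≤ c ^ (m*m) := by
    rw [hc]
    calc (Nat.factorial (m*m) : ℝ) ≤ (((2 * m * 4 ^ m) ^ (m*m) : ℕ) : ℝ) := by
          exact_mod_cast hnat
      _ = (2 * (m:ℝ) * 4 ^ m) ^ (m*m) := by push_cast; ring
  calc (Nat.factorial (m*m) : ℝ) * (1/c) ^ (m*m) ≤ c ^ (m*m) * (1/c) ^ (m*m) := by
        apply mul_le_mul_of_nonneg_right hnat' (by positivity)
    _ = 1 := by
        rw [← mul_pow]
        field_simp
        simp
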